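/- Let (a_ε)_{ε∈(0,1]} be a bounded family of real numbers and let B be its set of limit points as ε → 0 (b ∈ B iff there is a sequence ε_k → 0 with a_{ε_k} → b). Let (ξ₀,τ₀) ∈ ℝ²\{(0,0)} be such that τ₀ ≠ −bξ₀ for all b ∈ B. Then there exist an open cone Γ ⊆ ℝ²\{0} containing (ξ₀,τ₀), a constant C > 0 and η > 0 such that |τ + a_ε ξ| ≥ C(|ξ| + |τ|) for all (ξ,τ) ∈ Γ and all 0 < ε < η. (In the Colombeau framework this shows the point (ξ₀,τ₀) is non-characteristic for the operator ∂_t + a∂_x with generalized constant coefficient a.) -/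

import Mathlib

open Filter Topology

/--
Let `(a_ε)_{ε∈(0,1]}` be a bounded family of real numbers with limit
point set `B` as `ε → 0`. Let `(ξ₀,τ₀) ∈ ℝ² \ {0}` with `τ₀ ≠ −b·ξ₀` for all `b ∈ B`.
Then there are an open cone `Γ ⊆ ℝ² \ {0}` containing `(ξ₀,τ₀)`, `C > 0` and `η > 0`
such that `|τ + a_ε ξ| ≥ C(|ξ| + |τ|)` for all `(ξ,τ) ∈ Γ` and `0 < ε < η`.
-/
theorem stmt10 (a : ℝ → ℝ)
    (hbound : ∃ C : ℝ, ∀ ε ∈ Set.Ioc (0 : ℝ) 1, |a ε| ≤ C)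
    (B : Set ℝ)
    (hB : B = {b | ∃ e : ℕ → ℝ, (∀ k, e k ∈ Set.Ioc (0 : ℝ) 1) ∧
      Tendsto e atTop (𝓝 0) ∧ Tendsto (fun k => a (e k)) atTop (𝓝 b)})
    (ξ₀ τ₀ : ℝ) (hne : (ξ₀, τ₀) ≠ (0, 0))
    (hchar : ∀ b ∈ B, τ₀ ≠ -b * ξ₀) :
    ∃ Γ : Set (ℝ × ℝ),
      IsOpen Γ ∧ (0 : ℝ × ℝ) ∉ Γ ∧ (∀ p ∈ Γ, ∀ t : ℝ, 0 < t → t • p ∈ Γ) ∧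
      (ξ₀, τ₀) ∈ Γ ∧
      ∃ C : ℝ, 0 < C ∧ ∃ η : ℝ, 0 < η ∧
        ∀ p ∈ Γ, ∀ ε : ℝ, 0 < ε → ε < η →
          C * (|p.1| + |p.2|) ≤ |p.2 + a ε * p.1| := by
  obtain ⟨M, hM⟩ := hbound
  have hM0 : 0 ≤ M := le_trans (abs_nonneg _) (hM 1 ⟨one_pos, le_refl 1⟩)
  -- the key claim
  have key : ∃ c > 0, ∃ η > 0, η ≤ 1 ∧ ∀ ε : ℝ, 0 < ε → ε < η → c ≤ |τ₀ + a ε * ξ₀| := by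
    by_contra h
    push_neg at h
    have H : ∀ k : ℕ, ∃ ε : ℝ, 0 < ε ∧ ε < 1/((k:ℝ)+1) ∧ |τ₀ + a ε * ξ₀| < 1/((k:ℝ)+1) := by
      intro k
      have hpos : (0:ℝ) < 1/((k:ℝ)+1) := by positivity
      have hle : (1:ℝ)/((k:ℝ)+1) ≤ 1 := by
        rw [div_le_one (by positivity)]
        linarith [Nat.cast_nonneg (α := ℝ) k]
      obtain ⟨ε, hε1, hε2, hε3⟩ := h (1/((k:ℝ)+1)) hpos (1/((k:ℝ)+1)) hpos hle
      exact ⟨ε, hε1, hε2, hε3⟩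
    choose e he0 heη hlt using H
    have heIoc : ∀ k, e k ∈ Set.Ioc (0:ℝ) 1 := by
      intro k
      refine ⟨he0 k, le_trans (le_of_lt (heη k)) ?_⟩
      rw [div_le_one (by positivity)]
      linarith [Nat.cast_nonneg (α := ℝ) k]
    have htendinv : Tendsto (fun k : ℕ => (1:ℝ)/(k+1)) atTop (𝓝 0) :=
      tendsto_one_div_add_atTop_nhds_zero_nat
    have he_tend : Tendsto e atTop (𝓝 0) := by
      refine squeeze_zero (fun k => le_of_lt (he0 k)) (fun k => le_of_lt (heη k)) htendinv
    have hmem : ∀ k, a (e k) ∈ Set.Icc (-M) M := by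
      intro k
      have := hM (e k) (heIoc k)
      exact ⟨neg_le_of_abs_le this, le_of_abs_le this⟩
    obtain ⟨b, _, φ, hφ, hconv⟩ :=
      tendsto_subseq_of_bounded (Metric.isBounded_Icc (-M) M) hmem
    have hbB : b ∈ B := by
      rw [hB]
      exact ⟨e ∘ φ, fun k => heIoc (φ k),
        he_tend.comp hφ.tendsto_atTop, hconv⟩
    have habs : Tendsto (fun k => |τ₀ + a (e (φ k)) * ξ₀|) atTop (𝓝 0) := by
      refine squeeze_zero (fun k => abs_nonneg _) (fun k => ?_) htendinv
      have h1 : |τ₀ + a (e (φ k)) * ξ₀| < 1/((φ k : ℝ) + 1) := hlt (φ k)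
      have hk : k ≤ φ k := hφ.le_apply
      have h2 : (1:ℝ)/((φ k : ℝ) + 1) ≤ 1/((k:ℝ)+1) := by
        apply one_div_le_one_div_of_le (by positivity)
        have : (k:ℝ) ≤ (φ k : ℝ) := Nat.cast_le.mpr hk
        linarith
      linarith
    have habs2 : Tendsto (fun k => |τ₀ + a (e (φ k)) * ξ₀|) atTop (𝓝 (|τ₀ + b * ξ₀|)) :=
      ((tendsto_const_nhds.add (hconv.mul_const ξ₀))).abs
    have h0 : |τ₀ + b * ξ₀| = 0 := tendsto_nhds_unique habs2 habs
    have : τ₀ = -b * ξ₀ := by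
      have := abs_eq_zero.mp h0
      linarith
    exact hchar b hbB this
  obtain ⟨c, hc, η, hη, hη1, hkey⟩ := key
  set N : ℝ := |ξ₀| + |τ₀| with hNdef
  have hN : 0 < N := by
    by_contra h
    push_neg at h
    have h1 : |ξ₀| = 0 := le_antisymm (by have := abs_nonneg τ₀; simp only [hNdef] at h; linarith) (abs_nonneg _)
    have h2 : |τ₀| = 0 := le_antisymm (by have := abs_nonneg ξ₀; simp only [hNdef] at h; linarith) (abs_nonneg _)
    exact hne (by rw [abs_eq_zero.mp h1, abs_eq_zero.mp h2])
  set δ : ℝ := c / (2 * (M + 1)) with hδdef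
  have hδ : 0 < δ := by positivity
  have hNe : N = |ξ₀| + |τ₀| := rfl
  have hδe : δ = c / (2 * (M + 1)) := rfl
  clear_value N δ
  refine ⟨{p : ℝ × ℝ | 0 < |p.1| + |p.2| ∧
      |p.1 * N - ξ₀ * (|p.1| + |p.2|)| + |p.2 * N - τ₀ * (|p.1| + |p.2|)|
        < δ * (|p.1| + |p.2|)}, ?_, ?_, ?_, ?_, ?_⟩
  · have cs : Continuous fun p : ℝ × ℝ => |p.1| + |p.2| :=
      continuous_fst.abs.add continuous_snd.abs
    apply IsOpen.inter
    · exact isOpen_lt continuous_const cs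
    · exact isOpen_lt
        (((continuous_fst.mul continuous_const).sub (continuous_const.mul cs)).abs.add
          ((continuous_snd.mul continuous_const).sub (continuous_const.mul cs)).abs)
        (continuous_const.mul cs)
  · simp
  · rintro ⟨x, y⟩ ⟨hp1, hp2⟩ t ht
    simp only [Prod.smul_mk, smul_eq_mul, Set.mem_setOf_eq] at *
    have h1 : |t * x| = t * |x| := by rw [abs_mul, abs_of_pos ht]
    have h2 : |t * y| = t * |y| := by rw [abs_mul, abs_of_pos ht]
    constructor
    · rw [h1, h2]; nlinarith [mul_pos ht hp1]
    · have e1 : |t * x * N - ξ₀ * (|t * x| + |t * y|)| = t * |x * N - ξ₀ * (|x| + |y|)| := by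
        rw [h1, h2, show t * x * N - ξ₀ * (t * |x| + t * |y|)
            = t * (x * N - ξ₀ * (|x| + |y|)) from by ring, abs_mul, abs_of_pos ht]
      have e2 : |t * y * N - τ₀ * (|t * x| + |t * y|)| = t * |y * N - τ₀ * (|x| + |y|)| := by
        rw [h1, h2, show t * y * N - τ₀ * (t * |x| + t * |y|)
            = t * (y * N - τ₀ * (|x| + |y|)) from by ring, abs_mul, abs_of_pos ht]
      rw [e1, e2, h1, h2]
      calc t * |x * N - ξ₀ * (|x| + |y|)| + t * |y * N - τ₀ * (|x| + |y|)|
          = t * (|x * N - ξ₀ * (|x| + |y|)| + |y * N - τ₀ * (|x| + |y|)|) := by ring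
        _ < t * (δ * (|x| + |y|)) := by exact (mul_lt_mul_iff_right₀ ht).mpr hp2
        _ = δ * (t * |x| + t * |y|) := by ring
  · refine ⟨?_, ?_⟩ <;>
      simp only [Set.mem_setOf_eq, ← hNe, sub_self, abs_zero, add_zero]
    · exact hN
    · exact mul_pos hδ hN
  · refine ⟨c / (2 * N), by positivity, η, hη, ?_⟩
    rintro ⟨x, y⟩ ⟨hp1, hp2⟩ ε hε hεη
    simp only at *
    set s : ℝ := |x| + |y| with hsdef
    have hse : s = |x| + |y| := rfl
    clear_value s
    have haM : |a ε| ≤ M := hM ε ⟨hε, le_trans (le_of_lt hεη) hη1⟩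
    have hkc : c ≤ |τ₀ + a ε * ξ₀| := hkey ε hε hεη
    -- lower bound N * |y + a ε * x|
    have tri : |s * (τ₀ + a ε * ξ₀)| - |N * (y + a ε * x)| ≤
        |s * (τ₀ + a ε * ξ₀) - N * (y + a ε * x)| := abs_sub_abs_le_abs_sub _ _
    have e1 : s * (τ₀ + a ε * ξ₀) - N * (y + a ε * x)
        = -((y * N - τ₀ * s) + a ε * (x * N - ξ₀ * s)) := by ring
    have e2 : |s * (τ₀ + a ε * ξ₀) - N * (y + a ε * x)|
        ≤ |y * N - τ₀ * s| + |a ε| * |x * N - ξ₀ * s| := by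
      rw [e1, abs_neg]
      calc |(y * N - τ₀ * s) + a ε * (x * N - ξ₀ * s)|
          ≤ |y * N - τ₀ * s| + |a ε * (x * N - ξ₀ * s)| := abs_add_le _ _
        _ = |y * N - τ₀ * s| + |a ε| * |x * N - ξ₀ * s| := by rw [abs_mul]
    have e3 : |s * (τ₀ + a ε * ξ₀)| = s * |τ₀ + a ε * ξ₀| := by
      rw [abs_mul, abs_of_pos hp1]
    have e4 : |N * (y + a ε * x)| = N * |y + a ε * x| := by
      rw [abs_mul, abs_of_pos hN]
    have h5 : |y * N - τ₀ * s| + |a ε| * |x * N - ξ₀ * s|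
        ≤ (M + 1) * (|x * N - ξ₀ * s| + |y * N - τ₀ * s|) := by
      have n1 := abs_nonneg (x * N - ξ₀ * s)
      have n2 := abs_nonneg (y * N - τ₀ * s)
      nlinarith [abs_nonneg (a ε)]
    have h6 : (M + 1) * (|x * N - ξ₀ * s| + |y * N - τ₀ * s|) ≤ (M + 1) * (δ * s) := by
      apply mul_le_mul_of_nonneg_left (le_of_lt hp2) (by linarith)
    have h7 : (M + 1) * (δ * s) = c * s / 2 := by
      rw [hδe]; field_simp
    have h8 : s * c ≤ s * |τ₀ + a ε * ξ₀| := by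
      apply mul_le_mul_of_nonneg_left hkc (le_of_lt hp1)
    have hfin : c * s / 2 ≤ N * |y + a ε * x| := by
      rw [e3, e4] at tri
      nlinarith
    rw [div_mul_eq_mul_div, div_le_iff₀ (by positivity)]
    nlinarith
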